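/- arXiv:1412.0179 — 2 statements merged into one kernel-verified Lean document; each statement's English description precedes it below -/
import Mathlib

section
/- If p = 2, e ≥ 2, and m = 1, then the linearized Wenger graph L_1(q) with q = 2^e contains a cycle of length 6. -/
/-- In the linearized Wenger graph, point `P` is adjacent to line `L` iff
`l_k + p_k = p_1^{p^{k-2}} l_1` for `2 ≤ k ≤ m+1`. -/
def lwAdj (p : ℕ) {F : Type} [Field F] {m : ℕ} (P L : Fin (m + 1) → F) : Prop :=
  ∀ k : Fin m, L k.succ + P k.succ = P 0 ^ p ^ (k : ℕ) * L 0

/-- The linearized Wenger graph `L_m(q)` as a bipartite graph on points ⊕ lines. -/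
def lwGraph (p : ℕ) (F : Type) [Field F] (m : ℕ) :
    SimpleGraph ((Fin (m + 1) → F) ⊕ (Fin (m + 1) → F)) :=
  SimpleGraph.fromRel fun v w => match v, w with
    | Sum.inl P, Sum.inr L => lwAdj p P L
    | _, _ => False

lemma lw_adj_iff {F : Type} [Field F] (P L : Fin 2 → F) :
    (lwGraph 2 F 1).Adj (Sum.inl P) (Sum.inr L) ↔ L 1 + P 1 = P 0 * L 0 := by
  simp only [lwGraph, SimpleGraph.fromRel_adj]
  constructor
  · rintro ⟨-, h | h⟩
    · simpa using h 0
    · exact h.elim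
  · intro h
    refine ⟨by simp, Or.inl fun k => ?_⟩
    fin_cases k
    simpa using h

/-- For `p = 2`, `e ≥ 2`, `m = 1`, the linearized Wenger graph `L_1(2^e)` contains a
cycle of length `6`. -/
theorem stmt14 (e : ℕ) (he : 2 ≤ e) :
    ∃ (v : (Fin 2 → GaloisField 2 e) ⊕ (Fin 2 → GaloisField 2 e))
      (c : (lwGraph 2 (GaloisField 2 e) 1).Walk v v), c.IsCycle ∧ c.length = 6 := by
  set F := GaloisField 2 e with hF
  haveI : Fact (Nat.Prime 2) := ⟨Nat.prime_two⟩
  haveI : Fintype F := Fintype.ofFinite F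
  haveI : DecidableEq F := Classical.decEq F
  obtain ⟨α, hα0, hα1⟩ : ∃ α : F, α ≠ 0 ∧ α ≠ 1 := by
    by_contra h
    push_neg at h
    have hsub : (Finset.univ : Finset F) ⊆ {0, 1} := fun x _ => by
      rcases eq_or_ne x 0 with h0 | h0
      · simp [h0]
      · simp [h x h0]
    have h1 : Fintype.card F ≤ 2 :=
      le_trans (Finset.card_le_card hsub) (le_trans (Finset.card_insert_le _ _) (by simp))
    have h2 : Fintype.card F = 2 ^ e := by
      rw [← Nat.card_eq_fintype_card]; exact GaloisField.card 2 e (by omega)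
    have : 4 ≤ 2 ^ e := by calc 4 = 2^2 := rfl
                                _ ≤ 2^e := Nat.pow_le_pow_right (by norm_num) he
    omega
  have hchar : (2 : F) = 0 := by
    have := CharP.cast_eq_zero F 2
    simpa using this
  set β : F := α ^ 2 + α with hβdef
  have hα1' : α + 1 ≠ 0 := fun h => hα1 (by linear_combination h - hchar)
  have hβ : β ≠ 0 := by
    have : β = α * (α + 1) := by ring
    rw [this]; exact mul_ne_zero hα0 hα1'
  set P1 : Fin 2 → F := ![0, 0] with hP1
  set P2 : Fin 2 → F := ![α ^ 2, 0] with hP2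
  set P3 : Fin 2 → F := ![β, β] with hP3
  set L1 : Fin 2 → F := ![0, 0] with hL1
  set L2 : Fin 2 → F := ![α⁻¹ * β, α * β] with hL2
  set L3 : Fin 2 → F := ![1, 0] with hL3
  have h11 : (lwGraph 2 F 1).Adj (Sum.inl P1) (Sum.inr L1) := by
    rw [lw_adj_iff]; simp [hP1, hL1]
  have h21 : (lwGraph 2 F 1).Adj (Sum.inl P2) (Sum.inr L1) := by
    rw [lw_adj_iff]; simp [hP2, hL1]
  have h22 : (lwGraph 2 F 1).Adj (Sum.inl P2) (Sum.inr L2) := by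
    rw [lw_adj_iff]; simp [hP2, hL2]
    rw [pow_two, mul_assoc, mul_inv_cancel_left₀ (G₀ := GaloisField 2 e) hα0]
  have h32 : (lwGraph 2 F 1).Adj (Sum.inl P3) (Sum.inr L2) := by
    rw [lw_adj_iff]; simp [hP3, hL2]
    rw [show α⁻¹ * β = α + 1 by rw [hβdef, show α ^ 2 + α = α * (α + 1) by ring, inv_mul_cancel_left₀ (G₀ := GaloisField 2 e) hα0]]
    ring
  have h33 : (lwGraph 2 F 1).Adj (Sum.inl P3) (Sum.inr L3) := by
    rw [lw_adj_iff]; simp [hP3, hL3]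
  have h13 : (lwGraph 2 F 1).Adj (Sum.inl P1) (Sum.inr L3) := by
    rw [lw_adj_iff]; simp [hP1, hL1, hL3]
  have hα2 : α ^ 2 ≠ 0 := pow_ne_zero _ hα0
  have hαβ : α * β ≠ 0 := mul_ne_zero hα0 hβ
  have hP12 : P1 ≠ P2 := fun h => hα2 (by simpa [hP1, hL1, hP2] using (congrFun h 0).symm)
  have hP13 : P1 ≠ P3 := fun h => hβ (by simpa [hP1, hL1, hP3] using (congrFun h 0).symm)
  have hP23 : P2 ≠ P3 := fun h => hβ (by simpa [hP2, hP3] using (congrFun h 1).symm)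
  have hL12 : L1 ≠ L2 := fun h => hαβ (by simpa [hL1, hL2] using (congrFun h 1).symm)
  have hL13 : L1 ≠ L3 := fun h => one_ne_zero (α := F) (by simpa [hL1, hL3] using (congrFun h 0).symm)
  have hL23 : L2 ≠ L3 := fun h => hαβ (by simpa [hL2, hL3] using congrFun h 1)
  refine ⟨Sum.inl P1, .cons h11 (.cons h21.symm (.cons h22 (.cons h32.symm (.cons h33 (.cons h13.symm .nil))))), ?_, rfl⟩
  simp [SimpleGraph.Walk.isCycle_def, SimpleGraph.Walk.isTrail_def, hP12, hP13, hP23, hL12, hL13, hL23, hP12.symm, hP13.symm, hP23.symm, hL12.symm, hL13.symm, hL23.symm]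
end

section
/- If m ≤ e and m+1 ≤ e+1, the system t_1 v(x_1) + ⋯ + t_s v(x_s) = (0,…,0,1)^T in F_q^{m+1}, where v(x) = (1, x, x^p, …, x^{p^{m−1}})^T, has no solution with s ≤ m and x_i ∈ F_q, t_i ∈ F_q. Consequently, two lines L, L' of L_m(q) with L' − L = [0,…,0,1] are at distance at least 2(m+1), and the diameter of L_m(q) is exactly 2(m+1). -/
private def vv (p m : ℕ) {F : Type} [Field F] (x : F) : Fin (m+1) → F :=
  fun j => if (j : ℕ) = 0 then 1 else x ^ p ^ ((j : ℕ) - 1)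

variable {p : ℕ} {F : Type} [Field F] {m : ℕ}

private lemma adj_inl_inr (P L : Fin (m+1) → F) :
    (lwGraph p F m).Adj (Sum.inl P) (Sum.inr L) ↔ lwAdj p P L := by
  simp [lwGraph, SimpleGraph.fromRel_adj]

private lemma adj_inr_inl (P L : Fin (m+1) → F) :
    (lwGraph p F m).Adj (Sum.inr L) (Sum.inl P) ↔ lwAdj p P L := by
  simp [lwGraph, SimpleGraph.fromRel_adj]

private lemma not_adj_inr_inr (L L' : Fin (m+1) → F) :
    ¬ (lwGraph p F m).Adj (Sum.inr L) (Sum.inr L') := by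
  simp [lwGraph, SimpleGraph.fromRel_adj]

private lemma not_adj_inl_inl (P P' : Fin (m+1) → F) :
    ¬ (lwGraph p F m).Adj (Sum.inl P) (Sum.inl P') := by
  simp [lwGraph, SimpleGraph.fromRel_adj]

/-- the line through point `P` with first coordinate `c` -/
private def lineOf (p : ℕ) {F : Type} [Field F] {m : ℕ} (P : Fin (m+1) → F) (c : F) :
    Fin (m+1) → F :=
  Fin.cons c (fun k : Fin m => P 0 ^ p ^ (k : ℕ) * c - P k.succ)

private lemma lwAdj_lineOf (P : Fin (m+1) → F) (c : F) : lwAdj p P (lineOf p P c) := by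
  intro k
  simp [lineOf, Fin.cons_succ, Fin.cons_zero]

private lemma lwAdj_eq_lineOf {P L : Fin (m+1) → F} (h : lwAdj p P L) : L = lineOf p P (L 0) := by
  funext j
  induction j using Fin.cases with
  | zero => simp [lineOf]
  | succ k =>
    have := h k
    simp only [lineOf, Fin.cons_succ]
    linear_combination this

private lemma lineOf_sub (P : Fin (m+1) → F) (c c' : F) :
    ∀ j, lineOf p P c j - lineOf p P c' j = (c - c') * vv p m (P 0) j := by
  intro j
  induction j using Fin.cases with
  | zero => simp [lineOf, vv]
  | succ k =>
    simp only [lineOf, Fin.cons_succ, vv, Fin.val_succ, Nat.add_sub_cancel,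
      Nat.succ_ne_zero, if_neg (Nat.succ_ne_zero _), if_false]
    ring

private lemma vv_zero' (x : F) : vv p m x 0 = 1 := by simp [vv]

private lemma vv_succ (x : F) (k : Fin m) : vv p m x k.succ = x ^ p ^ (k : ℕ) := by
  simp [vv, Fin.val_succ]

private lemma two_step (L : Fin (m+1) → F) (tc x : F) :
    ∃ w : (lwGraph p F m).Walk (Sum.inr L) (Sum.inr (fun j => L j + tc * vv p m x j)),
      w.length = 2 := by
  set P : Fin (m+1) → F := Fin.cons x (fun k : Fin m => x ^ p ^ (k : ℕ) * L 0 - L k.succ) with hP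
  have h1 : lwAdj p P L := by
    intro k
    simp [hP, Fin.cons_succ, Fin.cons_zero]
  have h2 : lwAdj p P (fun j => L j + tc * vv p m x j) := by
    intro k
    simp only [hP, Fin.cons_succ, Fin.cons_zero, vv_succ, vv_zero', mul_one]
    ring
  exact ⟨SimpleGraph.Walk.cons ((adj_inr_inl P L).mpr h1)
    (SimpleGraph.Walk.cons ((adj_inl_inr P _).mpr h2) SimpleGraph.Walk.nil), rfl⟩

private lemma walk_of_UU : ∀ (s : ℕ) (xx tt : Fin s → F) (L : Fin (m+1) → F),
    ∃ w : (lwGraph p F m).Walk (Sum.inr L)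
      (Sum.inr (fun j => L j + ∑ i, tt i * vv p m (xx i) j)), w.length = 2 * s := by
  intro s
  induction s with
  | zero =>
    intro xx tt L
    have hL : (fun j => L j + ∑ i : Fin 0, tt i * vv p m (xx i) j) = L :=
      funext fun j => by simp
    rw [hL]
    exact ⟨SimpleGraph.Walk.nil, rfl⟩
  | succ s ih =>
    intro xx tt L
    set L1 : Fin (m+1) → F :=
      fun j => L j + ∑ i : Fin s, tt i.castSucc * vv p m (xx i.castSucc) j with hL1
    obtain ⟨w1, hw1⟩ := ih (fun i => xx i.castSucc) (fun i => tt i.castSucc) L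
    obtain ⟨w2, hw2⟩ := two_step (p := p) L1 (tt (Fin.last s)) (xx (Fin.last s))
    have hend : (fun j => L1 j + tt (Fin.last s) * vv p m (xx (Fin.last s)) j)
        = (fun j => L j + ∑ i : Fin (s+1), tt i * vv p m (xx i) j) := by
      funext j
      rw [Fin.sum_univ_castSucc]
      simp only [hL1]
      ring
    rw [← hend]
    refine ⟨w1.append w2, ?_⟩
    rw [SimpleGraph.Walk.length_append, hw1, hw2]
    ring

private lemma walk_parity {u v : (Fin (m+1) → F) ⊕ (Fin (m+1) → F)}
    (w : (lwGraph p F m).Walk u v) :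
    (∀ L L', u = Sum.inr L → v = Sum.inr L' →
      ∃ s, w.length = 2 * s ∧ ∃ xx tt : Fin s → F,
        ∀ j, L' j - L j = ∑ i, tt i * vv p m (xx i) j) ∧
    (∀ P L', u = Sum.inl P → v = Sum.inr L' →
      ∃ s c, w.length = 2 * s + 1 ∧ ∃ xx tt : Fin s → F,
        ∀ j, L' j - lineOf p P c j = ∑ i, tt i * vv p m (xx i) j) := by
  induction w with
  | nil =>
    constructor
    · rintro L L' rfl h
      obtain rfl : L = L' := by injection h
      exact ⟨0, rfl, Fin.elim0, Fin.elim0, fun j => by simp⟩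
    · rintro P L' rfl h
      exact absurd h (by simp)
  | @cons u b v had hq ih =>
    constructor
    · rintro L L' rfl rfl
      cases b with
      | inr L1 => exact absurd had (not_adj_inr_inr L L1)
      | inl P1 =>
        have hadj : lwAdj p P1 L := (adj_inr_inl P1 L).mp had
        obtain ⟨s, c, hlen, xx, tt, hxt⟩ := ih.2 P1 L' rfl rfl
        refine ⟨s + 1, by simp [SimpleGraph.Walk.length_cons, hlen]; ring, 
          Fin.snoc xx (P1 0), Fin.snoc tt (c - L 0), fun j => ?_⟩
        rw [Fin.sum_univ_castSucc]
        simp only [Fin.snoc_castSucc, Fin.snoc_last]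
        rw [← hxt j]
        have hL : L = lineOf p P1 (L 0) := lwAdj_eq_lineOf hadj
        have := lineOf_sub (p := p) P1 c (L 0) j
        rw [← this]
        conv_lhs => rw [hL]
        ring
    · rintro P L' rfl rfl
      cases b with
      | inl P1 => exact absurd had (not_adj_inl_inl P P1)
      | inr L1 =>
        have hadj : lwAdj p P L1 := (adj_inl_inr P L1).mp had
        obtain ⟨s, hlen, xx, tt, hxt⟩ := ih.1 L1 L' rfl rfl
        refine ⟨s, L1 0, by simp [SimpleGraph.Walk.length_cons, hlen], xx, tt, fun j => ?_⟩
        rw [← lwAdj_eq_lineOf hadj]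
        exact hxt j


section GF
variable {p e : ℕ} [Fact p.Prime]

private lemma zmod_pow_pow (z : ZMod p) (r : ℕ) : z ^ p ^ r = z := by
  induction r with
  | zero => simp
  | succ r ih => rw [pow_succ, pow_mul, ih, ZMod.pow_card]

private lemma algmap_pow_pow (z : ZMod p) (r : ℕ) :
    (algebraMap (ZMod p) (GaloisField p e) z) ^ p ^ r = algebraMap (ZMod p) (GaloisField p e) z := by
  rw [← map_pow, zmod_pow_pow]

private lemma moore {k : ℕ} {y : Fin k → GaloisField p e}
    (hy : LinearIndependent (ZMod p) y) {u : Fin k → GaloisField p e}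
    (hu : ∀ r : Fin k, ∑ j, u j * y j ^ p ^ (r : ℕ) = 0) : u = 0 := by
  classical
  by_contra hne
  have hk : k ≠ 0 := by rintro rfl; exact hne (funext fun j => j.elim0)
  have hp2 : 2 ≤ p := (Fact.out : p.Prime).two_le
  set M : Matrix (Fin k) (Fin k) (GaloisField p e) := Matrix.of fun r j => y j ^ p ^ (r : ℕ) with hM
  have hdet : M.det = 0 := by
    rw [← Matrix.exists_mulVec_eq_zero_iff]
    refine ⟨u, hne, ?_⟩
    funext r
    simpa [M, Matrix.mulVec, dotProduct, mul_comm] using hu r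
  have hdetT : (M.transpose).det = 0 := by rw [Matrix.det_transpose]; exact hdet
  obtain ⟨a, ha, haM⟩ := Matrix.exists_mulVec_eq_zero_iff.mpr hdetT
  have haj : ∀ j, ∑ r : Fin k, a r * y j ^ p ^ (r : ℕ) = 0 := by
    intro j
    have := congrFun haM j
    simpa [M, Matrix.mulVec, dotProduct, Matrix.transpose, mul_comm] using this
  set f : Polynomial (GaloisField p e) :=
    ∑ r : Fin k, Polynomial.C (a r) * Polynomial.X ^ (p ^ (r : ℕ)) with hf
  have hcoeff : ∀ r : Fin k, f.coeff (p ^ (r : ℕ)) = a r := by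
    intro r
    rw [hf, Polynomial.finset_sum_coeff]
    rw [Finset.sum_eq_single r]
    · simp
    · intro r' _ hr'
      have : p ^ (r' : ℕ) ≠ p ^ (r : ℕ) := by
        intro h
        exact hr' (Fin.ext (Nat.pow_right_injective hp2 h))
      simp [Polynomial.coeff_X_pow, Ne.symm this]
    · simp
  have hf0 : f ≠ 0 := by
    obtain ⟨r, hr⟩ := Function.ne_iff.mp ha
    intro h
    apply hr
    have := hcoeff r
    rw [h] at this
    simpa using this.symm
  have hdeg : f.natDegree ≤ p ^ (k - 1) := by
    rw [hf]
    apply Polynomial.natDegree_sum_le_of_forall_le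
    intro r _
    refine le_trans (Polynomial.natDegree_C_mul_le _ _) ?_
    refine le_trans (Polynomial.natDegree_X_pow_le _) ?_
    exact Nat.pow_le_pow_right (by omega) (by omega)
  have hroot : ∀ c : Fin k → ZMod p, f.IsRoot (∑ j, c j • y j) := by
    intro c
    have hpow : ∀ r : Fin k, (∑ j, c j • y j) ^ p ^ (r : ℕ) = ∑ j, c j • (y j ^ p ^ (r : ℕ)) := by
      intro r
      rw [← iterateFrobenius_def p (r : ℕ), map_sum]
      refine Finset.sum_congr rfl fun j _ => ?_
      rw [Algebra.smul_def, Algebra.smul_def, map_mul, iterateFrobenius_def,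
        iterateFrobenius_def, algmap_pow_pow]
    have hev : f.eval (∑ j, c j • y j) = ∑ r : Fin k, a r * (∑ j, c j • y j) ^ p ^ (r : ℕ) := by
      simp [hf, Polynomial.eval_finset_sum]
    rw [Polynomial.IsRoot, hev]
    calc ∑ r : Fin k, a r * (∑ j, c j • y j) ^ p ^ (r : ℕ)
        = ∑ r : Fin k, ∑ j, c j • (a r * y j ^ p ^ (r : ℕ)) := by
          refine Finset.sum_congr rfl fun r _ => ?_
          rw [hpow r, Finset.mul_sum]
          exact Finset.sum_congr rfl fun j _ => (mul_smul_comm _ _ _)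
      _ = ∑ j, c j • (∑ r : Fin k, a r * y j ^ p ^ (r : ℕ)) := by
          rw [Finset.sum_comm]
          exact Finset.sum_congr rfl fun j _ => (Finset.smul_sum).symm
      _ = 0 := by simp [haj]
  have hginj : Function.Injective fun c : Fin k → ZMod p => ∑ j, c j • y j := by
    intro c c' hcc
    simp only at hcc
    have h0 : ∑ j, (c j - c' j) • y j = 0 := by
      simp only [sub_smul, Finset.sum_sub_distrib, hcc, sub_self]
    have hfin := Fintype.linearIndependent_iff.mp hy _ h0
    funext j
    exact sub_eq_zero.mp (hfin j)
  have hcard : p ^ k ≤ p ^ (k - 1) := by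
    have h1 : (Finset.univ.image fun c : Fin k → ZMod p => ∑ j, c j • y j).card = p ^ k := by
      rw [Finset.card_image_of_injective _ hginj, Finset.card_univ, Fintype.card_fun]
      simp [ZMod.card]
    have h2 : (Finset.univ.image fun c : Fin k → ZMod p => ∑ j, c j • y j) ⊆ f.roots.toFinset := by
      intro w hw
      rw [Multiset.mem_toFinset, Polynomial.mem_roots hf0]
      obtain ⟨c, _, rfl⟩ := Finset.mem_image.mp hw
      exact hroot c
    calc p ^ k = _ := h1.symm
      _ ≤ f.roots.toFinset.card := Finset.card_le_card h2
      _ ≤ Multiset.card f.roots := Multiset.toFinset_card_le _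
      _ ≤ f.natDegree := Polynomial.card_roots' f
      _ ≤ p ^ (k - 1) := hdeg
  have : p ^ (k - 1) < p ^ k := Nat.pow_lt_pow_right (by omega) (by omega)
  omega

private lemma vshift {s' : ℕ} (x t : Fin (s'+1) → GaloisField p e)
    (h0 : ∑ i, t i = 0) (r : ℕ) :
    ∑ i : Fin s', t i.castSucc * (x i.castSucc - x (Fin.last s')) ^ p ^ r
      = ∑ i : Fin (s'+1), t i * x i ^ p ^ r := by
  have hsub : ∀ i : Fin s', (x i.castSucc - x (Fin.last s')) ^ p ^ r
      = x i.castSucc ^ p ^ r - x (Fin.last s') ^ p ^ r := fun i => sub_pow_char_pow _ _ _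
  have hsum : ∑ i : Fin s', t i.castSucc = - t (Fin.last s') := by
    rw [Fin.sum_univ_castSucc] at h0
    linear_combination h0
  rw [Fin.sum_univ_castSucc (f := fun i => t i * x i ^ p ^ r)]
  simp only [hsub, mul_sub]
  rw [Finset.sum_sub_distrib, ← Finset.sum_mul, hsum]
  ring

private lemma noSolution {m : ℕ} (hm : 1 ≤ m) (hme : m ≤ e)
    (s : ℕ) (hs : s ≤ m) (x t : Fin s → GaloisField p e)
    (heq : (fun j : Fin (m+1) => ∑ i, t i * (if (j : ℕ) = 0 then 1 else x i ^ p ^ ((j : ℕ) - 1)))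
      = fun j : Fin (m+1) => if (j : ℕ) = m then (1 : GaloisField p e) else 0) : False := by
  classical
  have hcoord : ∀ r : ℕ, r < m → ∑ i, t i * x i ^ p ^ r
      = if r + 1 = m then (1 : GaloisField p e) else 0 := by
    intro r hr
    have := congrFun heq ⟨r + 1, by omega⟩
    simpa using this
  have h0 : ∑ i, t i = 0 := by
    have h := congrFun heq ⟨0, by omega⟩
    simp only [Fin.val_mk] at h
    rw [if_neg (by omega : ¬ (0:ℕ) = m)] at h
    simpa using h
  cases s with
  | zero =>
    have := hcoord (m - 1) (by omega)
    simp [(by omega : m - 1 + 1 = m)] at this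
  | succ s' =>
    set z : Fin s' → GaloisField p e := fun i => x i.castSucc - x (Fin.last s') with hzdef
    set t' : Fin s' → GaloisField p e := fun i => t i.castSucc with ht'def
    have hz : ∀ r : ℕ, r < m → ∑ i, t' i * z i ^ p ^ r
        = if r + 1 = m then (1 : GaloisField p e) else 0 :=
      fun r hr => (vshift x t h0 r).trans (hcoord r hr)
    set W := Submodule.span (ZMod p) (Set.range z) with hW
    set k := Module.finrank (ZMod p) W with hkdef
    have hk : k ≤ s' := by
      refine le_trans (finrank_span_le_card (Set.range z)) ?_
      rw [Set.toFinset_range]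
      exact le_trans (Finset.card_image_le) (by simp)
    let b : Module.Basis (Fin k) (ZMod p) W := Module.finBasis (ZMod p) W
    set y : Fin k → GaloisField p e := fun j => (b j : GaloisField p e) with hydef
    have hy : LinearIndependent (ZMod p) y :=
      b.linearIndependent.map' W.subtype (Submodule.ker_subtype W)
    have hzW : ∀ i, z i ∈ W := fun i => Submodule.subset_span ⟨i, rfl⟩
    set c : Fin s' → Fin k → ZMod p := fun i j => b.repr ⟨z i, hzW i⟩ j with hcdef
    have hzy : ∀ i, z i = ∑ j, c i j • y j := by
      intro i
      have hrep := b.sum_repr ⟨z i, hzW i⟩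
      have := congrArg (W.subtype) hrep
      simpa [hydef, hcdef, -Module.Basis.sum_repr] using this.symm
    set u : Fin k → GaloisField p e :=
      fun j => ∑ i, t' i * algebraMap (ZMod p) (GaloisField p e) (c i j) with hudef
    have key : ∀ r : ℕ, ∑ j, u j * y j ^ p ^ r = ∑ i, t' i * z i ^ p ^ r := by
      intro r
      have hzr : ∀ i, z i ^ p ^ r = ∑ j, c i j • (y j ^ p ^ r) := by
        intro i
        rw [hzy i, ← iterateFrobenius_def p r, map_sum]
        refine Finset.sum_congr rfl fun j _ => ?_
        rw [Algebra.smul_def, Algebra.smul_def, map_mul, iterateFrobenius_def,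
          iterateFrobenius_def, ← map_pow, zmod_pow_pow]
      calc ∑ j, u j * y j ^ p ^ r
          = ∑ j, ∑ i, t' i * (algebraMap (ZMod p) (GaloisField p e) (c i j) * y j ^ p ^ r) := by
            refine Finset.sum_congr rfl fun j _ => ?_
            rw [hudef]
            rw [Finset.sum_mul]
            exact Finset.sum_congr rfl fun i _ => (mul_assoc _ _ _)
        _ = ∑ i, ∑ j, t' i * (algebraMap (ZMod p) (GaloisField p e) (c i j) * y j ^ p ^ r) :=
            Finset.sum_comm
        _ = ∑ i, t' i * z i ^ p ^ r := by
            refine Finset.sum_congr rfl fun i _ => ?_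
            rw [← Finset.mul_sum]
            congr 1
            rw [hzr i]
            exact (Finset.sum_congr rfl fun j _ => (Algebra.smul_def _ _)).symm
    have hu : ∀ r : Fin k, ∑ j, u j * y j ^ p ^ (r : ℕ) = 0 := by
      intro r
      rw [key (r : ℕ)]
      have hrm : (r : ℕ) < m := by have := r.isLt; omega
      rw [hz (r : ℕ) hrm, if_neg (by have := r.isLt; omega)]
    have hu0 : u = 0 := moore hy hu
    have hfin := key (m - 1)
    rw [hz (m - 1) (by omega), if_pos (by omega), hu0] at hfin
    simp at hfin

private lemma exists_indep0 {m : ℕ} (hm : 1 ≤ m) (hme : m ≤ e) :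
    ∃ y : Fin m → GaloisField p e, LinearIndependent (ZMod p) y := by
  have he : Module.finrank (ZMod p) (GaloisField p e) = e := GaloisField.finrank p (by omega)
  let b := Module.finBasis (ZMod p) (GaloisField p e)
  have hf : Function.Injective (fun i : Fin m => (⟨(i : ℕ), by omega⟩ :
      Fin (Module.finrank (ZMod p) (GaloisField p e)))) := by
    intro i i' h
    simpa [Fin.ext_iff] using h
  exact ⟨fun i => b ⟨(i : ℕ), by omega⟩, b.linearIndependent.comp _ hf⟩

private lemma exists_indep {m' : ℕ} (hme : m' + 1 ≤ e) {x : GaloisField p e} (hx : x ≠ 0) :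
    ∃ y : Fin (m' + 1) → GaloisField p e, y 0 = x ∧ LinearIndependent (ZMod p) y := by
  classical
  have hsing : LinearIndependent (ZMod p)
      (Subtype.val : ({x} : Set (GaloisField p e)) → GaloisField p e) :=
    linearIndependent_unique_iff.mpr (by simpa using hx)
  obtain ⟨B, _, hxB, hspan, hli⟩ :=
    exists_linearIndepOn_id_extension hsing (Set.subset_univ {x})
  replace hli : LinearIndependent (ZMod p) (Subtype.val : B → GaloisField p e) := hli
  have hxB' : x ∈ B := hxB rfl
  have hBfin : B.Finite := Set.toFinite B
  haveI := hBfin.fintype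
  have hspan' : Submodule.span (ZMod p) B = ⊤ := by
    rw [eq_top_iff]
    intro v _
    exact hspan (Set.mem_univ v)
  let Bb : Module.Basis B (ZMod p) (GaloisField p e) :=
    Module.Basis.mk hli (by rw [Subtype.range_coe, hspan'])
  have hcard : hBfin.toFinset.card = e := by
    have h1 := Module.finrank_eq_card_basis Bb
    rw [GaloisField.finrank p (by omega)] at h1
    rw [Set.Finite.card_toFinset]
    simp [h1.symm]
  have hxmem : x ∈ hBfin.toFinset := hBfin.mem_toFinset.mpr hxB'
  have hcard2 : m' ≤ (hBfin.toFinset.erase x).card := by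
    rw [Finset.card_erase_of_mem hxmem, hcard]; omega
  obtain ⟨S, hS, hScard⟩ := Finset.exists_subset_card_eq hcard2
  let g := (Finset.equivFinOfCardEq hScard).symm
  have hgB : ∀ i : Fin m', ((g i : GaloisField p e)) ∈ B := by
    intro i
    have := hS (g i).2
    exact hBfin.mem_toFinset.mp (Finset.mem_of_mem_erase this)
  have hgx : ∀ i : Fin m', ((g i : GaloisField p e)) ≠ x := by
    intro i
    exact Finset.ne_of_mem_erase (hS (g i).2)
  let ff : Fin (m' + 1) → B := Fin.cons ⟨x, hxB'⟩ (fun i => ⟨(g i : GaloisField p e), hgB i⟩)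
  have hffinj : Function.Injective ff := by
    intro i i' h
    induction i using Fin.cases with
    | zero =>
      induction i' using Fin.cases with
      | zero => rfl
      | succ j =>
        exfalso
        apply hgx j
        have := congrArg Subtype.val h
        simpa [ff] using this.symm
    | succ j =>
      induction i' using Fin.cases with
      | zero =>
        exfalso
        apply hgx j
        have := congrArg Subtype.val h
        simpa [ff] using this
      | succ j' =>
        have := congrArg Subtype.val h
        simp only [ff, Fin.cons_succ] at this
        have : g j = g j' := Subtype.ext this
        rw [g.injective this]
  refine ⟨fun i => (ff i : GaloisField p e), by simp [ff], ?_⟩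
  exact hli.comp ff hffinj

private lemma vcols_span {m : ℕ} {z : Fin m → GaloisField p e}
    (hz : LinearIndependent (ZMod p) z) (w : Fin (m+1) → GaloisField p e) :
    ∃ a : Fin (m+1) → GaloisField p e, ∀ j : Fin (m+1),
      w j = (∑ i : Fin m, a i.castSucc * vv p m (z i) j) + a (Fin.last m) * vv p m 0 j := by
  classical
  set cols : Fin (m+1) → (Fin (m+1) → GaloisField p e) :=
    Fin.snoc (fun i => vv p m (z i)) (vv p m (0 : GaloisField p e)) with hcols
  have licols : LinearIndependent (GaloisField p e) cols := by
    rw [Fintype.linearIndependent_iff]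
    intro g hg
    have happ : ∀ j : Fin (m+1), ∑ i, g i * cols i j = 0 := by
      intro j
      have := congrFun hg j
      simpa [Finset.sum_apply] using this
    have hup : ∀ k : Fin m, ∑ i : Fin m, g i.castSucc * z i ^ p ^ (k : ℕ) = 0 := by
      intro k
      have hthis := happ k.succ
      rw [Fin.sum_univ_castSucc] at hthis
      have hz0 : (0 : GaloisField p e) ^ p ^ (k : ℕ) = 0 :=
        zero_pow (pow_ne_zero _ (Nat.Prime.ne_zero Fact.out))
      simp only [hcols, Fin.snoc_castSucc, Fin.snoc_last, vv_succ, hz0, mul_zero,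
        add_zero] at hthis
      exact hthis
    have hcast : ∀ i : Fin m, g i.castSucc = 0 := by
      have := moore hz (u := fun i => g i.castSucc) hup
      intro i; exact congrFun this i
    have hlast : g (Fin.last m) = 0 := by
      have := happ 0
      rw [Fin.sum_univ_castSucc] at this
      simp only [hcols, Fin.snoc_castSucc, Fin.snoc_last, vv_zero', mul_one] at this
      simpa [hcast] using this
    intro i
    induction i using Fin.lastCases with
    | last => exact hlast
    | cast i => exact hcast i
  have hcardeq : Fintype.card (Fin (m+1)) = Module.finrank (GaloisField p e)
      (Fin (m+1) → GaloisField p e) := by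
    simp [Module.finrank_pi]
  let Bc := basisOfLinearIndependentOfCardEqFinrank licols hcardeq
  have hBc : ∀ i, Bc i = cols i := fun i => congrFun (coe_basisOfLinearIndependentOfCardEqFinrank _ _) i
  refine ⟨fun i => Bc.repr w i, fun j => ?_⟩
  have hw := Bc.sum_repr w
  have := congrFun hw j
  rw [Finset.sum_apply] at this
  conv_lhs => rw [← this]
  rw [Fin.sum_univ_castSucc]
  congr 1
  · refine Finset.sum_congr rfl fun i _ => ?_
    rw [hBc, hcols]
    simp [Fin.snoc_castSucc]
  · rw [hBc, hcols]
    simp [Fin.snoc_last]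

private lemma L1 {m : ℕ} (hm : 1 ≤ m) (hme : m ≤ e)
    (w : Fin (m+1) → GaloisField p e) (x : GaloisField p e) :
    ∃ cc : GaloisField p e, ∃ xs ts : Fin m → GaloisField p e,
      ∀ j, w j = cc * vv p m x j + ∑ i, ts i * vv p m (xs i) j := by
  by_cases hx : x = 0
  · obtain ⟨z, hz⟩ := exists_indep0 (p := p) (e := e) (m := m) hm hme
    obtain ⟨a, ha⟩ := vcols_span hz w
    refine ⟨a (Fin.last m), z, fun i => a i.castSucc, fun j => ?_⟩
    rw [ha j, hx]
    ring
  · obtain ⟨m', rfl⟩ : ∃ m', m = m' + 1 := ⟨m - 1, by omega⟩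
    obtain ⟨z, hz0, hz⟩ := exists_indep (m' := m') (by omega) hx
    obtain ⟨a, ha⟩ := vcols_span hz w
    refine ⟨a (0 : Fin (m'+1)).castSucc,
      Fin.snoc (fun i : Fin m' => z i.succ) 0,
      Fin.snoc (fun i : Fin m' => a i.succ.castSucc) (a (Fin.last (m'+1))), fun j => ?_⟩
    have hsum : (∑ i : Fin (m'+1),
        (Fin.snoc (fun i : Fin m' => a i.succ.castSucc) (a (Fin.last (m'+1))) :
          Fin (m'+1) → GaloisField p e) i *
          vv p (m'+1) ((Fin.snoc (fun i : Fin m' => z i.succ) (0 : GaloisField p e) :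
            Fin (m'+1) → GaloisField p e) i) j)
        = (∑ i : Fin m', a i.succ.castSucc * vv p (m'+1) (z i.succ) j)
          + a (Fin.last (m'+1)) * vv p (m'+1) (0 : GaloisField p e) j := by
      rw [Fin.sum_univ_castSucc]
      simp only [Fin.snoc_castSucc, Fin.snoc_last]
    rw [ha j, Fin.sum_univ_succ (f := fun i : Fin (m'+1) => a i.castSucc * vv p (m'+1) (z i) j),
      hsum, hz0]
    ring

private def UU (s m : ℕ) (w : Fin (m+1) → GaloisField p e) : Prop :=
  ∃ x t : Fin s → GaloisField p e, ∀ j, w j = ∑ i, t i * vv p m (x i) j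

private lemma UU_snoc {s m : ℕ} {w : Fin (m+1) → GaloisField p e} (h : UU s m w)
    (c x0 : GaloisField p e) : UU (s+1) m (fun j => w j + c * vv p m x0 j) := by
  obtain ⟨x, t, hxt⟩ := h
  refine ⟨Fin.snoc x x0, Fin.snoc t c, fun j => ?_⟩
  rw [Fin.sum_univ_castSucc]
  simp only [Fin.snoc_castSucc, Fin.snoc_last]
  rw [hxt j]

private lemma UU_sub {m : ℕ} (hm : 1 ≤ m) (hme : m ≤ e)
    (w : Fin (m+1) → GaloisField p e) (x : GaloisField p e) :
    ∃ c : GaloisField p e, UU m m (fun j => w j - c * vv p m x j) := by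
  obtain ⟨cc, xs, ts, h⟩ := L1 hm hme w x
  exact ⟨cc, xs, ts, fun j => by show w j - cc * vv p m x j = _; rw [h j]; ring⟩

private lemma UU_all {m : ℕ} (hm : 1 ≤ m) (hme : m ≤ e) (w : Fin (m+1) → GaloisField p e) :
    UU (m+1) m w := by
  obtain ⟨cc, xs, ts, h⟩ := L1 hm hme w 0
  have := UU_snoc (w := fun j => w j - cc * vv p m (0:GaloisField p e) j) ⟨xs, ts, fun j => by show w j - cc * vv p m (0:GaloisField p e) j = _; rw [h j]; ring⟩ cc 0
  simpa using this

end GF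


/-- If `m ≤ e`: the system `t_1 v(x_1) + ⋯ + t_s v(x_s) = (0,…,0,1)` with
`v(x) = (1, x, x^p, …, x^{p^{m-1}})` has no solution for `s ≤ m`; consequently two lines
differing by `[0,…,0,1]` are at distance at least `2(m+1)`, and the diameter of
`L_m(q)` is exactly `2(m+1)`. -/
theorem stmt18 (p e m : ℕ) [Fact p.Prime] (hm : 1 ≤ m) (hme : m ≤ e) :
    (∀ (s : ℕ), s ≤ m → ∀ x t : Fin s → GaloisField p e,
      (fun j : Fin (m + 1) => ∑ i : Fin s,
          t i * (if (j : ℕ) = 0 then 1 else x i ^ p ^ ((j : ℕ) - 1))) ≠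
        (fun j : Fin (m + 1) => if (j : ℕ) = m then 1 else 0)) ∧
    (∀ L L' : Fin (m + 1) → GaloisField p e,
      (L' - L = fun j : Fin (m + 1) => if (j : ℕ) = m then 1 else 0) →
      2 * (m + 1) ≤ (lwGraph p (GaloisField p e) m).dist (Sum.inr L) (Sum.inr L')) ∧
    (lwGraph p (GaloisField p e) m).diam = 2 * (m + 1) := by
  classical
  set G := lwGraph p (GaloisField p e) m with hG
  set em : Fin (m + 1) → GaloisField p e :=
    (fun j : Fin (m + 1) => if (j : ℕ) = m then 1 else 0) with hemdef
  have walklb : ∀ (L L' : Fin (m+1) → GaloisField p e), L' - L = em →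
      ∀ w : G.Walk (Sum.inr L) (Sum.inr L'), 2 * (m + 1) ≤ w.length := by
    intro L L' hdiff w
    obtain ⟨s, hlen, xx, tt, hxt⟩ := (walk_parity w).1 L L' rfl rfl
    rcases le_or_gt s m with hsle | hsgt
    · exfalso
      apply noSolution hm hme s hsle xx tt
      funext j
      show (∑ i, tt i * vv p m (xx i) j) = (if ((j : Fin (m+1)) : ℕ) = m then 1 else 0)
      rw [← hxt j]
      calc L' j - L j = (L' - L) j := (Pi.sub_apply _ _ _).symm
        _ = _ := by rw [hdiff]
    · omega
  have reach : ∀ L L' : Fin (m+1) → GaloisField p e,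
      ∃ w : G.Walk (Sum.inr L) (Sum.inr L'), w.length = 2 * (m + 1) := by
    intro L L'
    obtain ⟨xx, tt, hxt⟩ := UU_all hm hme (L' - L)
    obtain ⟨w, hw⟩ := walk_of_UU (m + 1) xx tt L
    have hend : (fun j => L j + ∑ i, tt i * vv p m (xx i) j) = L' := by
      funext j
      rw [← hxt j, Pi.sub_apply]
      ring
    exact ⟨w.copy rfl (by rw [hend]), by simpa using hw⟩
  have part2 : ∀ L L' : Fin (m+1) → GaloisField p e, L' - L = em →
      2 * (m + 1) ≤ G.dist (Sum.inr L) (Sum.inr L') := by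
    intro L L' hdiff
    obtain ⟨w0, _⟩ := reach L L'
    have hreach : G.Reachable (Sum.inr L) (Sum.inr L') := ⟨w0⟩
    obtain ⟨w, hw⟩ := hreach.exists_walk_length_eq_dist
    rw [← hw]
    exact walklb L L' hdiff w
  have wpl : ∀ (P L : Fin (m+1) → GaloisField p e),
      ∃ w : G.Walk (Sum.inl P) (Sum.inr L), w.length = 2 * m + 1 := by
    intro P L
    obtain ⟨c, xx, tt, hxt⟩ := UU_sub hm hme (fun j => L j - lineOf p P 0 j) (P 0)
    obtain ⟨w, hw⟩ := walk_of_UU m xx tt (lineOf p P c)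
    have hend : (fun j => lineOf p P c j + ∑ i, tt i * vv p m (xx i) j) = L := by
      funext j
      rw [← hxt j]
      have h2 := lineOf_sub (p := p) P c 0 j
      simp only []
      linear_combination h2
    have hadj : G.Adj (Sum.inl P) (Sum.inr (lineOf p P c)) :=
      (adj_inl_inr _ _).mpr (lwAdj_lineOf P c)
    refine ⟨SimpleGraph.Walk.cons hadj (w.copy rfl (by rw [hend])), ?_⟩
    simp only [SimpleGraph.Walk.length_cons, SimpleGraph.Walk.length_copy, hw]
  have hub : ∀ u v, G.edist u v ≤ ((2 * (m + 1) : ℕ) : ℕ∞) := by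
    intro u v
    have hwalk : ∃ w : G.Walk u v, w.length ≤ 2 * (m + 1) := by
      match u, v with
      | Sum.inl P, Sum.inl P' =>
        obtain ⟨w1, hw1⟩ := wpl P (lineOf p P' 0)
        have hadj : G.Adj (Sum.inr (lineOf p P' 0)) (Sum.inl P') :=
          (adj_inr_inl _ _).mpr (lwAdj_lineOf P' 0)
        exact ⟨w1.concat hadj, by rw [SimpleGraph.Walk.length_concat, hw1]; omega⟩
      | Sum.inl P, Sum.inr L =>
        obtain ⟨w1, hw1⟩ := wpl P L
        exact ⟨w1, by omega⟩
      | Sum.inr L, Sum.inl P =>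
        obtain ⟨w1, hw1⟩ := wpl P L
        exact ⟨w1.reverse, by rw [SimpleGraph.Walk.length_reverse]; omega⟩
      | Sum.inr L, Sum.inr L' =>
        obtain ⟨w1, hw1⟩ := reach L L'
        exact ⟨w1, by omega⟩
    obtain ⟨w, hw⟩ := hwalk
    calc G.edist u v ≤ (w.length : ℕ∞) := SimpleGraph.edist_le w
      _ ≤ _ := by exact_mod_cast hw
  have hediam_le : G.ediam ≤ ((2 * (m + 1) : ℕ) : ℕ∞) := SimpleGraph.ediam_le_of_edist_le hub
  have hediam_ge : ((2 * (m + 1) : ℕ) : ℕ∞) ≤ G.ediam := by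
    refine le_trans ?_ (SimpleGraph.edist_le_ediam (u := Sum.inr 0) (v := Sum.inr em))
    rcases eq_or_ne (G.edist (Sum.inr 0) (Sum.inr em)) ⊤ with h | h
    · rw [h]; exact le_top
    · obtain ⟨w, hw⟩ := SimpleGraph.exists_walk_of_edist_ne_top h
      rw [← hw]
      exact_mod_cast walklb 0 em (by simp) w
  have hediam : G.ediam = ((2 * (m + 1) : ℕ) : ℕ∞) := le_antisymm hediam_le hediam_ge
  refine ⟨fun s hs x t heq => noSolution hm hme s hs x t heq, part2, ?_⟩
  rw [SimpleGraph.diam, hediam, ENat.toNat_coe]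
end
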